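/- Let γ ∈ (0,1] and let π denote the circle constant. The set { m₁ + γ·m₂ : m₁, m₂ ∈ ℝ, m₁ ≥ 8π, m₂ ≥ 8π/γ, (m₁ − m₂)² = 8π(m₁ + m₂/γ) } has a least element, and this least element equals 16π(1 + γ); in particular the minimum is attained at m₁ = 8π, m₂ = 8π(2 + 1/γ). -/

import Mathlib

open Real

private theorem key_aux (γ p a b : ℝ) (hγ : 0 < γ) (hγ1 : γ ≤ 1) (hp : 0 < p)
    (ha : a ≥ p) (hb : γ * b ≥ p) (hc : γ * (a - b)^2 = p * (γ * a + b)) :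
    a + γ * b ≥ 2 * p * (1 + γ) := by
  rcases le_total a b with h | h
  · have h1 : (b - a + p) * (γ * (b - a) - p * (1 + γ)) = p * (1 + γ) * (a - p) := by
      linear_combination hc
    have h2 : 0 ≤ γ * (b - a) - p * (1 + γ) := by
      by_contra hcon
      push_neg at hcon
      have hpos : 0 < b - a + p := by linarith
      nlinarith [h1, mul_pos hpos (by linarith : 0 < p * (1 + γ) - γ * (b - a)),
        mul_nonneg (mul_nonneg hp.le (by linarith : (0:ℝ) ≤ 1 + γ)) (sub_nonneg.2 ha)]
    nlinarith [h2, mul_nonneg hγ.le (sub_nonneg.2 ha)]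
  · have h1 : (γ * (a - b) + p) * (γ * (a - b) - p * (1 + γ)) = p * (1 + γ) * (γ * b - p) := by
      linear_combination γ * hc
    have h2 : 0 ≤ γ * (a - b) - p * (1 + γ) := by
      by_contra hcon
      push_neg at hcon
      have hpos : 0 < γ * (a - b) + p := by nlinarith [mul_nonneg hγ.le (sub_nonneg.2 h)]
      nlinarith [h1, mul_pos hpos (by linarith : 0 < p * (1 + γ) - γ * (a - b)),
        mul_nonneg (mul_nonneg hp.le (by linarith : (0:ℝ) ≤ 1 + γ)) (sub_nonneg.2 hb)]
    nlinarith [h2, hb, mul_nonneg hγ.le (sub_nonneg.2 hb),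
      mul_nonneg hp.le (sub_nonneg.2 hγ1), mul_nonneg (mul_nonneg hp.le hγ.le) (sub_nonneg.2 hγ1)]

/-- The set of values m₁ + γ·m₂ over blow-up masses satisfying the
lower bounds and the quadratic identity has a least element, equal to 16π(1+γ),
attained at m₁ = 8π, m₂ = 8π(2 + 1/γ). -/
theorem stmt_0 (γ : ℝ) (hγ : γ ∈ Set.Ioc (0:ℝ) 1) :
    IsLeast {m : ℝ | ∃ m₁ m₂ : ℝ, m₁ ≥ 8 * π ∧ m₂ ≥ 8 * π / γ ∧
        (m₁ - m₂) ^ 2 = 8 * π * (m₁ + m₂ / γ) ∧ m = m₁ + γ * m₂}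
      (16 * π * (1 + γ)) ∧
    ((8 * π : ℝ) ≥ 8 * π ∧
      8 * π * (2 + 1 / γ) ≥ 8 * π / γ ∧
      (8 * π - 8 * π * (2 + 1 / γ)) ^ 2 = 8 * π * (8 * π + 8 * π * (2 + 1 / γ) / γ) ∧
      8 * π + γ * (8 * π * (2 + 1 / γ)) = 16 * π * (1 + γ)) := by
  obtain ⟨hγ0, hγ1⟩ := hγ
  have hγne : γ ≠ 0 := ne_of_gt hγ0
  have hπ : (0:ℝ) < π := Real.pi_pos
  have hcond2 : 8 * π * (2 + 1 / γ) ≥ 8 * π / γ := by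
    rw [ge_iff_le, div_le_iff₀ hγ0]
    have : 8 * π * (2 + 1 / γ) * γ = 16 * π * γ + 8 * π := by
      field_simp; ring
    rw [this]
    nlinarith [mul_pos hπ hγ0]
  have hcond3 : (8 * π - 8 * π * (2 + 1 / γ)) ^ 2
      = 8 * π * (8 * π + 8 * π * (2 + 1 / γ) / γ) := by
    field_simp
    ring
  have hcond4 : 8 * π + γ * (8 * π * (2 + 1 / γ)) = 16 * π * (1 + γ) := by
    field_simp
    ring
  refine ⟨⟨⟨8 * π, 8 * π * (2 + 1 / γ), le_refl _, hcond2, hcond3, hcond4.symm⟩, ?_⟩,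
    le_refl _, hcond2, hcond3, hcond4⟩
  rintro m ⟨m₁, m₂, h1, h2, h3, rfl⟩
  have hp : (0:ℝ) < 8 * π := by positivity
  have hb : γ * m₂ ≥ 8 * π := by
    rw [ge_iff_le, div_le_iff₀ hγ0] at h2
    linarith [h2]
  have hc : γ * (m₁ - m₂)^2 = 8 * π * (γ * m₁ + m₂) := by
    have : γ * (m₁ - m₂)^2 = γ * (8 * π * (m₁ + m₂ / γ)) := by rw [h3]
    rw [this]
    field_simp
  have := key_aux γ (8 * π) m₁ m₂ hγ0 hγ1 hp h1 hb hc
  linarith
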